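/- Let z_1, …, z_N be pairwise distinct complex numbers. Then the quadratic Gaudin Hamiltonians pairwise commute: H_i ∘ H_j = H_j ∘ H_i as endomorphisms of V_1 ⊗ ⋯ ⊗ V_N, for all 1 ≤ i, j ≤ N. -/

import Mathlib

open scoped TensorProduct

noncomputable section

variable {𝔤 : Type*} [LieRing 𝔤] [LieAlgebra ℂ 𝔤]
variable {N : ℕ} (V : Fin N → Type*) [∀ i, AddCommGroup (V i)] [∀ i, Module ℂ (V i)]
  [∀ i, LieRingModule 𝔤 (V i)] [∀ i, LieModule ℂ 𝔤 (V i)]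

/-- The endomorphism `x^{(i)}` of `V 1 ⊗ ⋯ ⊗ V N` acting as `x` in the `i`-th tensor
factor and as the identity in the other factors. -/
def opAt (i : Fin N) (x : 𝔤) : Module.End ℂ (⨂[ℂ] j, V j) :=
  PiTensorProduct.map
    (Function.update (fun j => (LinearMap.id : V j →ₗ[ℂ] V j)) i
      (LieModule.toEnd ℂ 𝔤 (V i) x))

/-- The quadratic Gaudin Hamiltonian
`H i = ∑_{k ≠ i} (z i - z k)⁻¹ ∑_a x_a^{(i)} ∘ x_a^{(k)}`. -/
def gaudinH {d : ℕ} (b : Fin d → 𝔤) (z : Fin N → ℂ) (i : Fin N) :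
    Module.End ℂ (⨂[ℂ] j, V j) :=
  ∑ k ∈ Finset.univ.erase i, (z i - z k)⁻¹ •
    ∑ a, opAt V i (b a) * opAt V k (b a)

attribute [local instance 100] LieRing.ofAssociativeRing

lemma opAt_tprod (i : Fin N) (x : 𝔤) (v : Π j, V j) :
    opAt V i x (PiTensorProduct.tprod ℂ v)
      = PiTensorProduct.tprod ℂ (Function.update v i ⁅x, v i⁆) := by
  rw [opAt, PiTensorProduct.map_tprod]
  congr 1
  ext j
  by_cases h : j = i
  · subst h; simp
  · simp [Function.update_of_ne h]

lemma opAt_add (i : Fin N) (x y : 𝔤) :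
    opAt V i (x + y) = opAt V i x + opAt V i y := by
  apply PiTensorProduct.ext
  ext v
  simp [opAt_tprod, add_lie]

lemma opAt_smul (i : Fin N) (c : ℂ) (x : 𝔤) :
    opAt V i (c • x) = c • opAt V i x := by
  apply PiTensorProduct.ext
  ext v
  simp [opAt_tprod, smul_lie]

/-- `opAt` as a linear map in `x`. -/
def opAtL (i : Fin N) : 𝔤 →ₗ[ℂ] Module.End ℂ (⨂[ℂ] j, V j) where
  toFun := opAt V i
  map_add' := opAt_add V i
  map_smul' := opAt_smul V i

lemma opAt_lie (i : Fin N) (x y : 𝔤) :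
    opAt V i ⁅x, y⁆ = opAt V i x * opAt V i y - opAt V i y * opAt V i x := by
  apply PiTensorProduct.ext
  ext v
  have h3 : ⁅⁅x, y⁆, v i⁆ = ⁅x, ⁅y, v i⁆⁆ - ⁅y, ⁅x, v i⁆⁆ := by
    rw [eq_sub_iff_add_eq]; exact (leibniz_lie x y (v i)).symm
  simp only [LinearMap.compMultilinearMap_apply, LinearMap.sub_apply, Module.End.mul_apply,
    opAt_tprod]
  simp only [Function.update_idem, Function.update_self]
  rw [h3, MultilinearMap.map_update_sub]

lemma opAt_commute {i k : Fin N} (h : i ≠ k) (x y : 𝔤) :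
    Commute (opAt V i x) (opAt V k y) := by
  apply PiTensorProduct.ext
  ext v
  simp only [LinearMap.compMultilinearMap_apply, Module.End.mul_apply, opAt_tprod,
    Function.update_of_ne h, Function.update_of_ne h.symm]
  rw [Function.update_comm h]

section RingHelpers

variable {A : Type*} [Ring A] [Algebra ℂ A]

lemma rlie_sum (x : A) {ι : Type*} (s : Finset ι) (f : ι → A) :
    ⁅x, ∑ i ∈ s, f i⁆ = ∑ i ∈ s, ⁅x, f i⁆ := by
  simp [Ring.lie_def, Finset.mul_sum, Finset.sum_mul, ← Finset.sum_sub_distrib]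

lemma rsum_lie (x : A) {ι : Type*} (s : Finset ι) (f : ι → A) :
    ⁅∑ i ∈ s, f i, x⁆ = ∑ i ∈ s, ⁅f i, x⁆ := by
  simp [Ring.lie_def, Finset.mul_sum, Finset.sum_mul, ← Finset.sum_sub_distrib]

lemma rlie_mul (a b c : A) : ⁅a, b * c⁆ = ⁅a, b⁆ * c + b * ⁅a, c⁆ := by
  simp only [Ring.lie_def]; noncomm_ring

lemma rcommute_lie {a b : A} (h : Commute a b) : ⁅a, b⁆ = 0 := by
  simp only [Ring.lie_def, sub_eq_zero]; exact h

variable {M : Type*} [AddCommGroup M] [Module ℂ M]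

lemma rlie_smul (c : ℂ) (x y : Module.End ℂ M) : ⁅x, c • y⁆ = c • ⁅x, y⁆ := by
  ext m; simp [Ring.lie_def, map_smul, smul_sub]

lemma rsmul_lie (c : ℂ) (x y : Module.End ℂ M) : ⁅c • x, y⁆ = c • ⁅x, y⁆ := by
  ext m; simp [Ring.lie_def, map_smul, smul_sub]

end RingHelpers

section Invariance

variable {d : ℕ} (bb : Module.Basis (Fin d) ℂ 𝔤)


lemma killing_repr (horth : ∀ a a' : Fin d, killingForm ℂ 𝔤 (bb a) (bb a') = if a = a' then 1 else 0) (x : 𝔤) : x = ∑ c, killingForm ℂ 𝔤 x (bb c) • bb c := by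
  have h : ∀ c, killingForm ℂ 𝔤 x (bb c) = bb.repr x c := by
    intro c
    conv_lhs => rw [← bb.sum_repr x]
    simp [horth, Finset.sum_ite_eq', -Module.Basis.sum_repr]
  conv_lhs => rw [← bb.sum_repr x]
  exact Finset.sum_congr rfl fun c _ => by rw [h c]


lemma killing_skew (y : 𝔤) (a c : Fin d) :
    killingForm ℂ 𝔤 ⁅y, bb c⁆ (bb a) = - killingForm ℂ 𝔤 ⁅y, bb a⁆ (bb c) := by
  rw [LieModule.traceForm_apply_lie_apply, LieModule.traceForm_apply_lie_apply,
    ← lie_skew (bb a) (bb c), map_neg, neg_neg]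


lemma sum_invariance (horth : ∀ a a' : Fin d, killingForm ℂ 𝔤 (bb a) (bb a') = if a = a' then 1 else 0) {M : Type*} [AddCommGroup M] [Module ℂ M]
    (T : 𝔤 →ₗ[ℂ] 𝔤 →ₗ[ℂ] M) (y : 𝔤) :
    ∑ a, (T ⁅y, bb a⁆ (bb a) + T (bb a) ⁅y, bb a⁆) = 0 := by
  have e1 : ∀ a, T ⁅y, bb a⁆ (bb a)
      = ∑ c, killingForm ℂ 𝔤 ⁅y, bb a⁆ (bb c) • T (bb c) (bb a) := by
    intro a
    conv_lhs => rw [killing_repr bb horth ⁅y, bb a⁆]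
    simp [Finset.sum_apply]
  have e2 : ∀ a, T (bb a) ⁅y, bb a⁆
      = ∑ c, killingForm ℂ 𝔤 ⁅y, bb a⁆ (bb c) • T (bb a) (bb c) := by
    intro a
    conv_lhs => rw [killing_repr bb horth ⁅y, bb a⁆]
    simp
  rw [Finset.sum_add_distrib]
  simp_rw [e1, e2]
  rw [Finset.sum_comm (s := Finset.univ) (t := Finset.univ)
    (f := fun a c => killingForm ℂ 𝔤 ⁅y, bb a⁆ (bb c) • T (bb a) (bb c))]
  have : ∀ a c : Fin d, killingForm ℂ 𝔤 ⁅y, bb c⁆ (bb a) • T (bb c) (bb a)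
      = - (killingForm ℂ 𝔤 ⁅y, bb a⁆ (bb c) • T (bb c) (bb a)) := by
    intro a c; rw [killing_skew bb y a c, neg_smul]
  simp_rw [this, Finset.sum_neg_distrib]
  exact add_neg_cancel _

end Invariance

section Omega

variable {d : ℕ}

/-- `Ω^{(ik)} = ∑_a x_a^{(i)} x_a^{(k)}`. -/
def OmegaOp (bb : Fin d → 𝔤) (i k : Fin N) : Module.End ℂ (⨂[ℂ] j, V j) :=
  ∑ a, opAt V i (bb a) * opAt V k (bb a)

lemma omega_symm (bb : Fin d → 𝔤) {i k : Fin N} (h : i ≠ k) :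
    OmegaOp V bb i k = OmegaOp V bb k i :=
  Finset.sum_congr rfl fun a _ => (opAt_commute V h (bb a) (bb a))

lemma opAt_commute_omega (bb : Fin d → 𝔤) {i k m : Fin N} (hmi : m ≠ i) (hmk : m ≠ k)
    (y : 𝔤) : Commute (opAt V m y) (OmegaOp V bb i k) :=
  Commute.sum_right _ _ _ fun a _ =>
    ((opAt_commute V hmi y (bb a)).mul_right (opAt_commute V hmk y (bb a)))

lemma omega_commute_omega (bb : Fin d → 𝔤) {i k i' k' : Fin N}
    (h1 : i ≠ i') (h2 : i ≠ k') (h3 : k ≠ i') (h4 : k ≠ k') :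
    Commute (OmegaOp V bb i k) (OmegaOp V bb i' k') :=
  Commute.sum_left _ _ _ fun a _ =>
    ((opAt_commute_omega V bb h1 h2 (bb a)).mul_left
      (opAt_commute_omega V bb h3 h4 (bb a)))

/-- Invariance: `⁅x^{(i)}(y) + x^{(k)}(y), Ω^{(ik)}⁆ = 0`. -/
lemma omega_invariance (bb : Module.Basis (Fin d) ℂ 𝔤)
    (horth : ∀ a a' : Fin d, killingForm ℂ 𝔤 (bb a) (bb a') = if a = a' then 1 else 0)
    {i k : Fin N} (h : i ≠ k) (y : 𝔤) :
    ⁅opAt V i y + opAt V k y, OmegaOp V (⇑bb) i k⁆ = 0 := by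
  rw [OmegaOp, rlie_sum]
  have key : ∀ a : Fin d, ⁅opAt V i y + opAt V k y, opAt V i (bb a) * opAt V k (bb a)⁆
      = opAt V i ⁅y, bb a⁆ * opAt V k (bb a) + opAt V i (bb a) * opAt V k ⁅y, bb a⁆ := by
    intro a
    have hik : ⁅opAt V i y, opAt V k (bb a)⁆ = 0 :=
      rcommute_lie (opAt_commute V h y (bb a))
    have hki : ⁅opAt V k y, opAt V i (bb a)⁆ = 0 :=
      rcommute_lie ((opAt_commute V h.symm y (bb a)))
    have hii : ⁅opAt V i y, opAt V i (bb a)⁆ = opAt V i ⁅y, bb a⁆ := by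
      rw [Ring.lie_def, ← opAt_lie]
    have hkk : ⁅opAt V k y, opAt V k (bb a)⁆ = opAt V k ⁅y, bb a⁆ := by
      rw [Ring.lie_def, ← opAt_lie]
    rw [add_lie, rlie_mul, rlie_mul, hik, hki, hii, hkk]
    rw [mul_zero, zero_mul, add_zero, zero_add]
  simp_rw [key]
  have := sum_invariance bb horth
    (T := (LinearMap.mul ℂ (Module.End ℂ (⨂[ℂ] j, V j))).compl₁₂ (opAtL V i) (opAtL V k)) y
  simpa only [LinearMap.compl₁₂_apply, LinearMap.mul_apply', opAtL, LinearMap.coe_mk,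
    AddHom.coe_mk] using this

end Omega

section Key

variable {d : ℕ} (bb : Module.Basis (Fin d) ℂ 𝔤)

lemma omega_bracket_expand {i j k : Fin N} (hki : k ≠ i) (hkj : k ≠ j) (m : Fin N) :
    ⁅OmegaOp V (⇑bb) i j, OmegaOp V (⇑bb) m k⁆
      = ∑ a, ⁅OmegaOp V (⇑bb) i j, opAt V m (bb a)⁆ * opAt V k (bb a) := by
  rw [show OmegaOp V (⇑bb) m k = ∑ a, opAt V m (bb a) * opAt V k (bb a) from rfl, rlie_sum]
  refine Finset.sum_congr rfl fun a _ => ?_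
  rw [rlie_mul]
  have h0 : ⁅OmegaOp V (⇑bb) i j, opAt V k (bb a)⁆ = 0 :=
    rcommute_lie (opAt_commute_omega V (⇑bb) hki hkj (bb a)).symm
  rw [h0, mul_zero, add_zero]

/-- The key identity `⁅Ω^{(ij)}, Ω^{(ik)} + Ω^{(jk)}⁆ = 0`. -/
lemma omega_key
    (horth : ∀ a a' : Fin d, killingForm ℂ 𝔤 (bb a) (bb a') = if a = a' then 1 else 0)
    {i j k : Fin N} (hij : i ≠ j) (hik : i ≠ k) (hjk : j ≠ k) :
    ⁅OmegaOp V (⇑bb) i j, OmegaOp V (⇑bb) i k⁆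
      + ⁅OmegaOp V (⇑bb) i j, OmegaOp V (⇑bb) j k⁆ = 0 := by
  rw [omega_bracket_expand V bb hik.symm hjk.symm i,
    omega_bracket_expand V bb hik.symm hjk.symm j, ← Finset.sum_add_distrib]
  have : ∀ a : Fin d,
      ⁅OmegaOp V (⇑bb) i j, opAt V i (bb a)⁆ * opAt V k (bb a)
        + ⁅OmegaOp V (⇑bb) i j, opAt V j (bb a)⁆ * opAt V k (bb a)
      = ⁅OmegaOp V (⇑bb) i j, opAt V i (bb a) + opAt V j (bb a)⁆ * opAt V k (bb a) := by
    intro a; rw [lie_add, add_mul]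
  simp_rw [this]
  have hz : ∀ a : Fin d, ⁅OmegaOp V (⇑bb) i j, opAt V i (bb a) + opAt V j (bb a)⁆ = 0 := by
    intro a
    rw [← lie_skew, omega_invariance V bb horth hij, neg_zero]
  simp_rw [hz, zero_mul, Finset.sum_const_zero]

end Key

lemma coeff_identity {a b c : ℂ} (hab : a ≠ b) (hac : a ≠ c) (hbc : b ≠ c) :
    (a - b)⁻¹ * (b - c)⁻¹ + (a - c)⁻¹ * (b - a)⁻¹ = (a - c)⁻¹ * (b - c)⁻¹ := by
  have h1 : a - b ≠ 0 := sub_ne_zero.mpr hab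
  have h2 : b - a ≠ 0 := sub_ne_zero.mpr hab.symm
  have h3 : a - c ≠ 0 := sub_ne_zero.mpr hac
  have h4 : b - c ≠ 0 := sub_ne_zero.mpr hbc
  field_simp
  ring

/-- for pairwise distinct `z₁, …, z_N`, the quadratic Gaudin
Hamiltonians pairwise commute. -/
theorem gaudin_hamiltonians_commute
    [LieAlgebra.IsSemisimple ℂ 𝔤] [FiniteDimensional ℂ 𝔤]
    [∀ i, FiniteDimensional ℂ (V i)]
    (hN : 0 < N) {d : ℕ} (b : Module.Basis (Fin d) ℂ 𝔤)
    (horth : ∀ a a' : Fin d, killingForm ℂ 𝔤 (b a) (b a') = if a = a' then 1 else 0)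
    (z : Fin N → ℂ) (hz : Function.Injective z) (i j : Fin N) :
    gaudinH V (⇑b) z i * gaudinH V (⇑b) z j = gaudinH V (⇑b) z j * gaudinH V (⇑b) z i := by
  rcases eq_or_ne i j with rfl | hij
  · rfl
  suffices h : ⁅gaudinH V (⇑b) z i, gaudinH V (⇑b) z j⁆ = 0 by
    rw [Ring.lie_def, sub_eq_zero] at h; exact h
  classical
  set Ω : Fin N → Fin N → Module.End ℂ (⨂[ℂ] j, V j) := fun p q => OmegaOp V (⇑b) p q with hΩ
  set S : Finset (Fin N) := Finset.univ \ {i, j} with hS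
  have hmemS : ∀ m, m ∈ S ↔ m ≠ i ∧ m ≠ j := by
    intro m; simp [hS]
  have hjS : j ∉ S := by simp [hmemS]
  have hiS : i ∉ S := by simp [hmemS]
  have hEi : Finset.univ.erase i = insert j S := by
    ext m
    simp only [Finset.mem_erase, Finset.mem_univ, and_true, Finset.mem_insert, hmemS]
    constructor
    · intro hm; rcases eq_or_ne m j with rfl | hmj
      · exact Or.inl rfl
      · exact Or.inr ⟨hm, hmj⟩
    · rintro (rfl | ⟨hm, _⟩)
      · exact hij.symm
      · exact hm
  have hEj : Finset.univ.erase j = insert i S := by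
    ext m
    simp only [Finset.mem_erase, Finset.mem_univ, and_true, Finset.mem_insert, hmemS]
    constructor
    · intro hm; rcases eq_or_ne m i with rfl | hmi
      · exact Or.inl rfl
      · exact Or.inr ⟨hmi, hm⟩
    · rintro (rfl | ⟨_, hm⟩)
      · exact hij
      · exact hm
  have hHi : gaudinH V (⇑b) z i
      = (z i - z j)⁻¹ • Ω i j + ∑ m ∈ S, (z i - z m)⁻¹ • Ω i m := by
    rw [gaudinH, hEi, Finset.sum_insert hjS]; rfl
  have hHj : gaudinH V (⇑b) z j
      = (z j - z i)⁻¹ • Ω i j + ∑ m ∈ S, (z j - z m)⁻¹ • Ω j m := by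
    rw [gaudinH, hEj, Finset.sum_insert hiS,
      show (∑ a, opAt V j (b a) * opAt V i (b a)) = OmegaOp V (⇑b) i j from
        omega_symm V (⇑b) hij.symm]
    rfl
  -- the basic bracket facts
  have hDz : ∀ m ∈ S, z i ≠ z m ∧ z j ≠ z m := by
    intro m hm
    rw [hmemS] at hm
    exact ⟨fun h => hm.1 (hz h).symm, fun h => hm.2 (hz h).symm⟩
  have f1 : ∀ m ∈ S, ⁅Ω i j, Ω i m⁆ = -⁅Ω i j, Ω j m⁆ := by
    intro m hm; rw [hmemS] at hm
    exact eq_neg_of_add_eq_zero_left (omega_key V b horth hij hm.1.symm hm.2.symm)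
  have f2 : ∀ m ∈ S, ⁅Ω i m, Ω i j⁆ = ⁅Ω i j, Ω j m⁆ := by
    intro m hm
    rw [← lie_skew, f1 m hm, neg_neg]
  have f3 : ∀ m ∈ S, ⁅Ω i m, Ω j m⁆ = -⁅Ω i j, Ω j m⁆ := by
    intro m hmS
    have hm := (hmemS m).mp hmS
    have hkey := omega_key V b horth (j := m) (k := j) hm.1.symm hij hm.2
    rw [show OmegaOp V (⇑b) m j = OmegaOp V (⇑b) j m from omega_symm V (⇑b) hm.2] at hkey
    have := eq_neg_of_add_eq_zero_right hkey
    rw [this, f2 m hmS]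
  rw [hHi, hHj, lie_add, add_lie, add_lie]
  -- term 1
  have t1 : ⁅(z i - z j)⁻¹ • Ω i j, (z j - z i)⁻¹ • Ω i j⁆ = 0 := by
    rw [rlie_smul, rsmul_lie, lie_self, smul_zero, smul_zero]
  -- term 2
  have t2 : ⁅(z i - z j)⁻¹ • Ω i j, ∑ m ∈ S, (z j - z m)⁻¹ • Ω j m⁆
      = ∑ m ∈ S, ((z i - z j)⁻¹ * (z j - z m)⁻¹) • ⁅Ω i j, Ω j m⁆ := by
    rw [rlie_sum]
    exact Finset.sum_congr rfl fun m _ => by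
      rw [rlie_smul, rsmul_lie, smul_smul, mul_comm]
  -- term 3
  have t3 : ⁅∑ m ∈ S, (z i - z m)⁻¹ • Ω i m, (z j - z i)⁻¹ • Ω i j⁆
      = ∑ m ∈ S, ((z i - z m)⁻¹ * (z j - z i)⁻¹) • ⁅Ω i m, Ω i j⁆ := by
    rw [rsum_lie]
    exact Finset.sum_congr rfl fun m _ => by
      rw [rlie_smul, rsmul_lie, smul_smul, mul_comm]
  -- term 4
  have t4 : ⁅∑ m ∈ S, (z i - z m)⁻¹ • Ω i m, ∑ m ∈ S, (z j - z m)⁻¹ • Ω j m⁆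
      = ∑ m ∈ S, ((z i - z m)⁻¹ * (z j - z m)⁻¹) • ⁅Ω i m, Ω j m⁆ := by
    rw [rsum_lie]
    have row : ∀ m ∈ S, ⁅(z i - z m)⁻¹ • Ω i m, ∑ m' ∈ S, (z j - z m')⁻¹ • Ω j m'⁆
        = ((z i - z m)⁻¹ * (z j - z m)⁻¹) • ⁅Ω i m, Ω j m⁆ := by
      intro m hm
      rw [rlie_sum]
      rw [Finset.sum_eq_single_of_mem m hm]
      · rw [rlie_smul, rsmul_lie, smul_smul, mul_comm]
      · intro m' hm' hne
        rw [hmemS] at hm hm'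
        have hcomm : Commute (Ω i m) (Ω j m') :=
          omega_commute_omega V (⇑b) hij hm'.1.symm hm.2 hne.symm
        rw [rlie_smul, rsmul_lie, rcommute_lie hcomm, smul_zero, smul_zero]
    exact Finset.sum_congr rfl row
  rw [t1, t2, t3, t4, zero_add, ← Finset.sum_add_distrib, ← Finset.sum_add_distrib]
  refine Finset.sum_eq_zero fun m hm => ?_
  obtain ⟨hzim, hzjm⟩ := hDz m hm
  rw [f2 m hm, f3 m hm, smul_neg]
  rw [show (z i - z m)⁻¹ * (z j - z m)⁻¹
      = (z i - z j)⁻¹ * (z j - z m)⁻¹ + (z i - z m)⁻¹ * (z j - z i)⁻¹ from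
    (coeff_identity (fun h => hij (hz h)) hzim hzjm).symm]
  rw [add_smul]
  abel
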